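/- Let G be a c-uniform hypergraph on V = {1,…,n}, let α̃ ≥ 0 and τ ∈ ℕ, let S ⊆ V with |S| + 1 ≤ τ, and suppose that for every i ∈ V, every set in 𝒮'(S) and in 𝒮'(S ∪ {i}) has size at most τ/10. Write S_max = S'_max(S) and, for i ∈ V, S^i_max = S'_max(S ∪ {i}). Then for every i ∈ V∖S_max such that no hyperedge of E(S^i_max) contains i, the set S_max ∪ {i} belongs to 𝒮'(S ∪ {i}). -/

import Mathlib

open Finset
open scoped Classical

/-- Φ(S) = α̃ |E(S)| − |S|, where E(S) is the set of hyperedges of `G` contained in `S`. -/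
noncomputable def Phi (n : ℕ) (G : Finset (Finset (Fin n))) (αt : ℝ)
    (S : Finset (Fin n)) : ℝ :=
  αt * ((G.filter fun e => e ⊆ S).card : ℝ) - S.card

/-- Φ°(S): the maximum of Φ over candidate sets `S'` for `S` (sets with
`S ⊆ S'` and `|S'| ≤ τ`). -/
noncomputable def PhiOpt (n : ℕ) (G : Finset (Finset (Fin n))) (αt : ℝ) (τ : ℕ)
    (S : Finset (Fin n)) : ℝ :=
  sSup {x : ℝ | ∃ S' : Finset (Fin n), S ⊆ S' ∧ S'.card ≤ τ ∧ x = Phi n G αt S'}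

/-- 𝒮'(S): the collection of candidate sets for `S` attaining `Φ°(S)`. -/
def OptSets (n : ℕ) (G : Finset (Finset (Fin n))) (αt : ℝ) (τ : ℕ)
    (S : Finset (Fin n)) : Set (Finset (Fin n)) :=
  {S' | S ⊆ S' ∧ S'.card ≤ τ ∧ Phi n G αt S' = PhiOpt n G αt τ S}

/-- S'_max(S): the union of all sets in 𝒮'(S). -/
noncomputable def Smax (n : ℕ) (G : Finset (Finset (Fin n))) (αt : ℝ) (τ : ℕ)
    (S : Finset (Fin n)) : Finset (Fin n) :=
  (Finset.univ.filter fun S' => S' ∈ OptSets n G αt τ S).sup id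

section Aux

variable {n : ℕ} {G : Finset (Finset (Fin n))} {αt : ℝ} {τ : ℕ}

/-- The candidate value set. -/
def CandSet (n : ℕ) (G : Finset (Finset (Fin n))) (αt : ℝ) (τ : ℕ)
    (S : Finset (Fin n)) : Set ℝ :=
  {x : ℝ | ∃ S' : Finset (Fin n), S ⊆ S' ∧ S'.card ≤ τ ∧ x = Phi n G αt S'}

lemma candSet_finite (S : Finset (Fin n)) : (CandSet n G αt τ S).Finite := by
  apply Set.Finite.subset (Set.finite_range (Phi n G αt))
  rintro x ⟨S', _, _, rfl⟩
  exact ⟨S', rfl⟩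

lemma candSet_nonempty {S : Finset (Fin n)} (h : S.card ≤ τ) :
    (CandSet n G αt τ S).Nonempty :=
  ⟨Phi n G αt S, S, subset_rfl, h, rfl⟩

lemma phi_le_phiOpt {S S' : Finset (Fin n)} (h : S ⊆ S') (hc : S'.card ≤ τ) :
    Phi n G αt S' ≤ PhiOpt n G αt τ S :=
  le_csSup (candSet_finite S).bddAbove ⟨S', h, hc, rfl⟩

lemma exists_opt {S : Finset (Fin n)} (h : S.card ≤ τ) :
    ∃ S', S' ∈ OptSets n G αt τ S := by
  have := (candSet_nonempty (G := G) (αt := αt) h).csSup_mem (candSet_finite S)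
  obtain ⟨S', h1, h2, h3⟩ := this
  exact ⟨S', h1, h2, h3.symm⟩

lemma phi_supermod (hαt : 0 ≤ αt) (A B : Finset (Fin n)) :
    Phi n G αt A + Phi n G αt B ≤ Phi n G αt (A ∪ B) + Phi n G αt (A ∩ B) := by
  unfold Phi
  have hcard : (A ∪ B).card + (A ∩ B).card = A.card + B.card :=
    Finset.card_union_add_card_inter A B
  have hinter : (G.filter fun e => e ⊆ A) ∩ (G.filter fun e => e ⊆ B)
      = G.filter fun e => e ⊆ A ∩ B := by
    ext e
    simp only [Finset.mem_inter, Finset.mem_filter, Finset.subset_inter_iff]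
    tauto
  have hsub : (G.filter fun e => e ⊆ A) ∪ (G.filter fun e => e ⊆ B)
      ⊆ G.filter fun e => e ⊆ A ∪ B := by
    intro e he
    rcases Finset.mem_union.1 he with h | h <;>
      simp only [Finset.mem_filter] at h ⊢ <;>
      exact ⟨h.1, h.2.trans (by simp [Finset.subset_union_left, Finset.subset_union_right])⟩
  have hedge : (G.filter fun e => e ⊆ A).card + (G.filter fun e => e ⊆ B).card
      ≤ (G.filter fun e => e ⊆ A ∪ B).card + (G.filter fun e => e ⊆ A ∩ B).card := by
    rw [← hinter]
    calc (G.filter fun e => e ⊆ A).card + (G.filter fun e => e ⊆ B).card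
        = ((G.filter fun e => e ⊆ A) ∪ (G.filter fun e => e ⊆ B)).card
          + ((G.filter fun e => e ⊆ A) ∩ (G.filter fun e => e ⊆ B)).card :=
          (Finset.card_union_add_card_inter _ _).symm
      _ ≤ _ := Nat.add_le_add_right (Finset.card_le_card hsub) _
  have hedge' : ((G.filter fun e => e ⊆ A).card : ℝ) + (G.filter fun e => e ⊆ B).card
      ≤ ((G.filter fun e => e ⊆ A ∪ B).card : ℝ) + (G.filter fun e => e ⊆ A ∩ B).card := by
    exact_mod_cast hedge
  have hcard' : ((A ∪ B).card : ℝ) + (A ∩ B).card = (A.card : ℝ) + B.card := by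
    exact_mod_cast hcard
  nlinarith [mul_le_mul_of_nonneg_left hedge' hαt]

lemma union_opt (hαt : 0 ≤ αt) {S A B : Finset (Fin n)}
    (hb : ∀ S' ∈ OptSets n G αt τ S, (S'.card : ℝ) ≤ (τ : ℝ) / 10)
    (hA : A ∈ OptSets n G αt τ S) (hB : B ∈ OptSets n G αt τ S) :
    A ∪ B ∈ OptSets n G αt τ S := by
  obtain ⟨hAS, hAc, hAv⟩ := hA
  obtain ⟨hBS, hBc, hBv⟩ := hB
  have hcard : (A ∪ B).card ≤ τ := by
    have h1 := hb A ⟨hAS, hAc, hAv⟩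
    have h2 := hb B ⟨hBS, hBc, hBv⟩
    have h3 : ((A ∪ B).card : ℝ) ≤ (A.card : ℝ) + B.card := by
      exact_mod_cast Finset.card_union_le A B
    have : ((A ∪ B).card : ℝ) ≤ (τ : ℝ) := by
      have hτ : (0 : ℝ) ≤ (τ : ℝ) := Nat.cast_nonneg τ
      linarith
    exact_mod_cast this
  have hsubU : S ⊆ A ∪ B := hAS.trans Finset.subset_union_left
  have hint : Phi n G αt (A ∩ B) ≤ PhiOpt n G αt τ S :=
    phi_le_phiOpt (Finset.subset_inter hAS hBS)
      (le_trans (Finset.card_le_card Finset.inter_subset_left) hAc)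
  have hge : PhiOpt n G αt τ S ≤ Phi n G αt (A ∪ B) := by
    have := phi_supermod (G := G) hαt A B
    rw [hAv, hBv] at this
    linarith
  exact ⟨hsubU, hcard, le_antisymm (phi_le_phiOpt hsubU hcard) hge⟩

lemma smax_opt (hαt : 0 ≤ αt) {S : Finset (Fin n)} (hSc : S.card ≤ τ)
    (hb : ∀ S' ∈ OptSets n G αt τ S, (S'.card : ℝ) ≤ (τ : ℝ) / 10) :
    Smax n G αt τ S ∈ OptSets n G αt τ S := by
  have key : ∀ F : Finset (Finset (Fin n)), F.Nonempty →
      (∀ A ∈ F, A ∈ OptSets n G αt τ S) → F.sup id ∈ OptSets n G αt τ S := by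
    intro F
    induction F using Finset.induction_on with
    | empty => intro h; exact absurd rfl h.ne_empty
    | @insert a F' hnot ih =>
      intro _ hmem
      rcases F'.eq_empty_or_nonempty with rfl | hne
      · simpa using hmem a (Finset.mem_insert_self a _)
      · rw [Finset.sup_insert]
        exact union_opt hαt hb (hmem a (Finset.mem_insert_self a _))
          (ih hne fun A hA => hmem A (Finset.mem_insert_of_mem hA))
  obtain ⟨S₀, hS₀⟩ := exists_opt (G := G) (αt := αt) hSc
  apply key
  · exact ⟨S₀, Finset.mem_filter.2 ⟨Finset.mem_univ _, hS₀⟩⟩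
  · intro A hA; exact (Finset.mem_filter.1 hA).2

end Aux

theorem stmt13 (n c : ℕ) (G : Finset (Finset (Fin n))) (hG : ∀ e ∈ G, e.card = c)
    (αt : ℝ) (hαt : 0 ≤ αt) (τ : ℕ) (S : Finset (Fin n)) (hS : S.card + 1 ≤ τ)
    (h1 : ∀ S' ∈ OptSets n G αt τ S, (S'.card : ℝ) ≤ (τ : ℝ) / 10)
    (h2 : ∀ i : Fin n, ∀ S' ∈ OptSets n G αt τ (insert i S),
      (S'.card : ℝ) ≤ (τ : ℝ) / 10) :
    ∀ i : Fin n, i ∉ Smax n G αt τ S →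
      -- i is isolated in E(S^i_max): no hyperedge of E(S^i_max) contains i
      (∀ e ∈ G.filter fun e => e ⊆ Smax n G αt τ (insert i S), i ∉ e) →
      insert i (Smax n G αt τ S) ∈ OptSets n G αt τ (insert i S) := by
  intro i hiSmax hiso
  set M := Smax n G αt τ S with hM
  have hMopt : M ∈ OptSets n G αt τ S := smax_opt hαt (by omega) h1
  obtain ⟨hSM, hMc, hMv⟩ := hMopt
  have hiS : i ∉ S := fun h => hiSmax (hSM h)
  have hiScard : (insert i S).card ≤ τ := by
    rw [Finset.card_insert_of_notMem hiS]; omega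
  -- T := Smax(insert i S)
  set T := Smax n G αt τ (insert i S) with hT
  have hTopt : T ∈ OptSets n G αt τ (insert i S) := smax_opt hαt hiScard (h2 i)
  obtain ⟨hST, hTc, hTv⟩ := hTopt
  have hiT : i ∈ T := hST (Finset.mem_insert_self i S)
  -- E(T.erase i) = E(T)
  have hEerase : (G.filter fun e => e ⊆ T.erase i) = G.filter fun e => e ⊆ T := by
    ext e
    simp only [Finset.mem_filter]
    constructor
    · rintro ⟨heG, hsub⟩; exact ⟨heG, hsub.trans (Finset.erase_subset i T)⟩
    · rintro ⟨heG, hsub⟩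
      refine ⟨heG, fun x hx => Finset.mem_erase.2 ⟨?_, hsub hx⟩⟩
      rintro rfl
      exact hiso e (Finset.mem_filter.2 ⟨heG, hsub⟩) hx
  -- Φ(T.erase i) = Φ(T) + 1
  have hPhiErase : Phi n G αt (T.erase i) = Phi n G αt T + 1 := by
    unfold Phi
    rw [hEerase, Finset.card_erase_of_mem hiT]
    have hT1 : 1 ≤ T.card := Finset.card_pos.2 ⟨i, hiT⟩
    have : ((T.card - 1 : ℕ) : ℝ) = (T.card : ℝ) - 1 := by
      push_cast [hT1]; ring
    rw [this]; ring
  -- Step A: PhiOpt S ≥ PhiOpt (insert i S) + 1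
  have hSTerase : S ⊆ T.erase i := fun x hx =>
    Finset.mem_erase.2 ⟨fun h => hiS (h ▸ hx), hST (Finset.mem_insert_of_mem hx)⟩
  have hA : PhiOpt n G αt τ (insert i S) + 1 ≤ PhiOpt n G αt τ S := by
    have := phi_le_phiOpt (G := G) (αt := αt) hSTerase
      (le_trans (Finset.card_le_card (Finset.erase_subset i T)) hTc)
    rw [hPhiErase, hTv] at this
    linarith
  -- card bound for insert i M
  have hMcard10 : 10 * M.card ≤ τ := by
    have := h1 M ⟨hSM, hMc, hMv⟩
    have h10 : (10 : ℝ) * M.card ≤ (τ : ℝ) := by linarith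
    exact_mod_cast h10
  have hSMle : S.card ≤ M.card := Finset.card_le_card hSM
  have hiMcard : (insert i M).card ≤ τ := by
    rw [Finset.card_insert_of_notMem hiSmax]; omega
  -- Step B: Φ(insert i M) ≥ PhiOpt (insert i S)
  have hB : PhiOpt n G αt τ (insert i S) ≤ Phi n G αt (insert i M) := by
    have hmono : (G.filter fun e => e ⊆ M).card ≤ (G.filter fun e => e ⊆ insert i M).card := by
      apply Finset.card_le_card
      intro e he
      simp only [Finset.mem_filter] at he ⊢
      exact ⟨he.1, he.2.trans (Finset.subset_insert i M)⟩
    have hmono' : ((G.filter fun e => e ⊆ M).card : ℝ)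
        ≤ ((G.filter fun e => e ⊆ insert i M).card : ℝ) := by exact_mod_cast hmono
    have hPhiIns : Phi n G αt M - 1 ≤ Phi n G αt (insert i M) := by
      unfold Phi
      rw [Finset.card_insert_of_notMem hiSmax]
      push_cast
      nlinarith [mul_le_mul_of_nonneg_left hmono' hαt]
    rw [hMv] at hPhiIns
    linarith
  have hsubIns : insert i S ⊆ insert i M := Finset.insert_subset_insert i hSM
  exact ⟨hsubIns, hiMcard, le_antisymm (phi_le_phiOpt hsubIns hiMcard) hB⟩
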